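/- Let A and B be Banach algebras and let T : A → B be a surjective bounded algebra homomorphism. Define the bounded bilinear map m : A × A → B by m(a₁,a₂) = T(a₁a₂). Then B is Arens regular if and only if m is Arens regular. -/

import Mathlib

open Filter Topology ContinuousLinearMap NormedSpace

noncomputable section

namespace NormedSpace

/-- The topological dual of a normed space, as in the older Mathlib (`E →L[𝕜] 𝕜`). -/
abbrev Dual (𝕜 : Type*) [NontriviallyNormedField 𝕜] (E : Type*) [SeminormedAddCommGroup E]
    [NormedSpace 𝕜 E] : Type _ :=
  E →L[𝕜] 𝕜

end NormedSpace

variable {X Y Z W E F : Type*}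
  [NormedAddCommGroup X] [NormedSpace ℂ X]
  [NormedAddCommGroup Y] [NormedSpace ℂ Y]
  [NormedAddCommGroup Z] [NormedSpace ℂ Z]
  [NormedAddCommGroup E] [NormedSpace ℂ E]
  [NormedAddCommGroup F] [NormedSpace ℂ F]

/-- The (first) Arens adjoint `m* : Z* × X → Y*` of a bounded bilinear map
`m : X × Y → Z`, characterized by `⟨m*(z',x), y⟩ = ⟨z', m(x,y)⟩`. -/
noncomputable def arensAdj (m : X →L[ℂ] Y →L[ℂ] Z) :
    Dual ℂ Z →L[ℂ] X →L[ℂ] Dual ℂ Y :=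
  ((ContinuousLinearMap.compL ℂ Y Z ℂ).flip.comp m).flip

/-- The Arens triple adjoint `m*** : X** × Y** → Z**`. -/
noncomputable def arensExt (m : X →L[ℂ] Y →L[ℂ] Z) :
    Dual ℂ (Dual ℂ X) →L[ℂ] Dual ℂ (Dual ℂ Y) →L[ℂ] Dual ℂ (Dual ℂ Z) :=
  arensAdj (arensAdj (arensAdj m))

/-- A map between dual spaces is weak*-weak* continuous. -/
def IsWeakStarCont (f : Dual ℂ E → Dual ℂ F) : Prop :=
  Continuous fun x : WeakDual ℂ E =>
    StrongDual.toWeakDual (f (WeakDual.toStrongDual x))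

/-- First topological center of a bounded bilinear map. -/
def arensZ1 (m : X →L[ℂ] Y →L[ℂ] Z) : Set (Dual ℂ (Dual ℂ X)) :=
  {x'' | IsWeakStarCont fun y'' => arensExt m x'' y''}

/-- Second topological center of a bounded bilinear map. -/
def arensZ2 (m : X →L[ℂ] Y →L[ℂ] Z) : Set (Dual ℂ (Dual ℂ Y)) :=
  {y'' | IsWeakStarCont fun x'' => arensExt m.flip y'' x''}

/-- `m` is Arens regular when `m*** = m^{t***t}`. -/
def ArensRegular (m : X →L[ℂ] Y →L[ℂ] Z) : Prop :=
  arensExt m = (arensExt m.flip).flip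

/-- `m` is left strongly Arens irregular when `Z₁(m)` is the canonical image of `X`. -/
def LeftStronglyArensIrregular (m : X →L[ℂ] Y →L[ℂ] Z) : Prop :=
  arensZ1 m = Set.range (NormedSpace.inclusionInDoubleDual ℂ X)

/-- `m` is right strongly Arens irregular when `Z₂(m)` is the canonical image of `Y`. -/
def RightStronglyArensIrregular (m : X →L[ℂ] Y →L[ℂ] Z) : Prop :=
  arensZ2 m = Set.range (NormedSpace.inclusionInDoubleDual ℂ Y)

/-- The adjoint `T* : F* → E*` of a bounded linear map. -/
noncomputable def dualMap' (T : E →L[ℂ] F) : Dual ℂ F →L[ℂ] Dual ℂ E :=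
  (ContinuousLinearMap.compL ℂ E F ℂ).flip T

/-- The second adjoint `T** : E** → F**` of a bounded linear map. -/
noncomputable def bidualMap (T : E →L[ℂ] F) :
    Dual ℂ (Dual ℂ E) →L[ℂ] Dual ℂ (Dual ℂ F) :=
  dualMap' (dualMap' T)

/-- A net in `A`: a function from a nonempty directed preorder to `A`. -/
structure Net (A : Type*) where
  ι : Type
  [pre : Preorder ι]
  [dir : IsDirected ι (· ≤ ·)]
  [ne : Nonempty ι]
  e : ι → A

attribute [instance] Net.pre Net.dir Net.ne

/-- A bounded approximate identity for a (non-unital) Banach algebra. -/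
def IsBAI {A : Type*} [NonUnitalNormedRing A] (N : Net A) : Prop :=
  (∃ C : ℝ, ∀ i, ‖N.e i‖ ≤ C) ∧
  (∀ a : A, Tendsto (fun i => N.e i * a) atTop (𝓝 a)) ∧
  (∀ a : A, Tendsto (fun i => a * N.e i) atTop (𝓝 a))

end

section auxlemmas

variable {X X₁ Y Y₁ Z E F : Type*}
  [NormedAddCommGroup X] [NormedSpace ℂ X]
  [NormedAddCommGroup X₁] [NormedSpace ℂ X₁]
  [NormedAddCommGroup Y] [NormedSpace ℂ Y]
  [NormedAddCommGroup Y₁] [NormedSpace ℂ Y₁]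
  [NormedAddCommGroup Z] [NormedSpace ℂ Z]
  [NormedAddCommGroup E] [NormedSpace ℂ E]
  [NormedAddCommGroup F] [NormedSpace ℂ F]

lemma my_arensAdj_apply (m : X →L[ℂ] Y →L[ℂ] Z) (z' : Dual ℂ Z) (x : X) (y : Y) :
    arensAdj m z' x y = z' (m x y) := rfl

lemma my_dualMap'_apply (T : E →L[ℂ] F) (f : Dual ℂ F) (x : E) :
    dualMap' T f x = f (T x) := rfl

lemma my_bidualMap_apply (T : E →L[ℂ] F) (x'' : Dual ℂ (Dual ℂ E)) (f : Dual ℂ F) :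
    bidualMap T x'' f = x'' (dualMap' T f) := rfl

lemma my_arensExt_comp (p : X₁ →L[ℂ] Y₁ →L[ℂ] Z) (S : X →L[ℂ] X₁) (S' : Y →L[ℂ] Y₁)
    (M : X →L[ℂ] Y →L[ℂ] Z) (hM : ∀ x y, M x y = p (S x) (S' y))
    (x'' : Dual ℂ (Dual ℂ X)) (y'' : Dual ℂ (Dual ℂ Y)) :
    arensExt M x'' y'' = arensExt p (bidualMap S x'') (bidualMap S' y'') := by
  have h1 : ∀ (z' : Dual ℂ Z) (x : X),
      arensAdj M z' x = dualMap' S' (arensAdj p z' (S x)) := by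
    intro z' x; ext y
    simp only [my_arensAdj_apply, my_dualMap'_apply, hM]
  have h2 : ∀ z' : Dual ℂ Z, arensAdj (arensAdj M) y'' z' =
      dualMap' S (arensAdj (arensAdj p) (bidualMap S' y'') z') := by
    intro z'; ext x
    show y'' (arensAdj M z' x) = _
    rw [h1]
    rfl
  ext z'
  show x'' (arensAdj (arensAdj M) y'' z') = _
  rw [h2]
  rfl

lemma my_bidualMap_surjective [CompleteSpace E] [CompleteSpace F] (T : E →L[ℂ] F)
    (hsurj : Function.Surjective T) : Function.Surjective (bidualMap T) := by
  obtain ⟨C, hC0, hC⟩ := T.exists_preimage_norm_le hsurj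
  have hbd : ∀ f : Dual ℂ F, ‖f‖ ≤ C * ‖dualMap' T f‖ := by
    intro f
    refine f.opNorm_le_bound (by positivity) fun b => ?_
    obtain ⟨x, hx, hxn⟩ := hC b
    calc ‖f b‖ = ‖dualMap' T f x‖ := by rw [my_dualMap'_apply, hx]
      _ ≤ ‖dualMap' T f‖ * ‖x‖ := (dualMap' T f).le_opNorm x
      _ ≤ ‖dualMap' T f‖ * (C * ‖b‖) := by gcongr
      _ = C * ‖dualMap' T f‖ * ‖b‖ := by ring
  have hinj : Function.Injective (dualMap' T) := by
    intro f g hfg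
    have h := hbd (f - g)
    rw [map_sub, hfg, sub_self, norm_zero, mul_zero] at h
    exact sub_eq_zero.mp (norm_le_zero_iff.mp h)
  intro z''
  set e := LinearEquiv.ofInjective ((dualMap' T : Dual ℂ F →L[ℂ] Dual ℂ E) : Dual ℂ F →ₗ[ℂ] Dual ℂ E) hinj with he
  let φ₀ : LinearMap.range ((dualMap' T : Dual ℂ F →L[ℂ] Dual ℂ E) : Dual ℂ F →ₗ[ℂ] Dual ℂ E) →ₗ[ℂ] ℂ :=
    (z'' : Dual ℂ F →ₗ[ℂ] ℂ).comp e.symm.toLinearMap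
  have hφ : ∀ v, ‖φ₀ v‖ ≤ (‖z''‖ * C) * ‖v‖ := by
    intro v
    have hv : (↑(e (e.symm v)) : Dual ℂ E) = dualMap' T (e.symm v) :=
      LinearEquiv.ofInjective_apply _ _
    rw [e.apply_symm_apply] at hv
    calc ‖φ₀ v‖ = ‖z'' (e.symm v)‖ := rfl
      _ ≤ ‖z''‖ * ‖e.symm v‖ := z''.le_opNorm _
      _ ≤ ‖z''‖ * (C * ‖dualMap' T (e.symm v)‖) := by gcongr; exact hbd _
      _ = (‖z''‖ * C) * ‖(v : Dual ℂ E)‖ := by rw [← hv]; ring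
  let φ := φ₀.mkContinuous (‖z''‖ * C) (fun v => hφ v)
  obtain ⟨g, hg, -⟩ := exists_extension_norm_eq _ φ
  refine ⟨g, ?_⟩
  ext f
  have hmem : dualMap' T f ∈
      LinearMap.range ((dualMap' T : Dual ℂ F →L[ℂ] Dual ℂ E) : Dual ℂ F →ₗ[ℂ] Dual ℂ E) :=
    ⟨f, rfl⟩
  have hef : e f = ⟨dualMap' T f, hmem⟩ := Subtype.ext (LinearEquiv.ofInjective_apply _ _)
  calc bidualMap T g f = g (dualMap' T f) := rfl
    _ = φ ⟨dualMap' T f, hmem⟩ := hg ⟨dualMap' T f, hmem⟩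
    _ = z'' (e.symm ⟨dualMap' T f, hmem⟩) := rfl
    _ = z'' f := by rw [← hef, e.symm_apply_apply]

end auxlemmas

/-- For a surjective bounded algebra homomorphism `T : A → B`,
`B` is Arens regular iff `m(a₁,a₂) = T(a₁a₂)` is Arens regular. -/
theorem stmt_8 {A B : Type*} [NonUnitalNormedRing A] [NormedSpace ℂ A] [IsScalarTower ℂ A A] [SMulCommClass ℂ A A] [CompleteSpace A] [NonUnitalNormedRing B] [NormedSpace ℂ B] [IsScalarTower ℂ B B] [SMulCommClass ℂ B B] [CompleteSpace B]
    (T : A →L[ℂ] B)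
    (hhom : ∀ a b : A, T (a * b) = T a * T b)
    (hsurj : Function.Surjective T) :
    ArensRegular (ContinuousLinearMap.mul ℂ B) ↔
      ArensRegular
        ((ContinuousLinearMap.compL ℂ A A B T).comp (ContinuousLinearMap.mul ℂ A)) := by
  
  set m := (ContinuousLinearMap.compL ℂ A A B T).comp (ContinuousLinearMap.mul ℂ A) with hmdef
  have hm : ∀ a b : A, m a b = ContinuousLinearMap.mul ℂ B (T a) (T b) := by
    intro a b
    simp [hmdef, hhom a b]
  have hmf : ∀ a b : A, m.flip a b = (ContinuousLinearMap.mul ℂ B).flip (T a) (T b) := by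
    intro a b
    simp only [ContinuousLinearMap.flip_apply]
    exact hm b a
  have key : ∀ x'' y'', arensExt m x'' y'' =
      arensExt (ContinuousLinearMap.mul ℂ B) (bidualMap T x'') (bidualMap T y'') :=
    my_arensExt_comp _ T T m hm
  have keyf : ∀ y'' x'', arensExt m.flip y'' x'' =
      arensExt (ContinuousLinearMap.mul ℂ B).flip (bidualMap T y'') (bidualMap T x'') :=
    my_arensExt_comp _ T T m.flip hmf
  constructor
  · intro h
    refine ContinuousLinearMap.ext fun x'' => ContinuousLinearMap.ext fun y'' => ?_
    have hgoal : (arensExt m.flip).flip x'' y'' = arensExt m.flip y'' x'' := rfl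
    rw [hgoal, key, keyf, h]
    rfl
  · intro h
    refine ContinuousLinearMap.ext fun b₁ => ContinuousLinearMap.ext fun b₂ => ?_
    obtain ⟨x'', hx⟩ := my_bidualMap_surjective T hsurj b₁
    obtain ⟨y'', hy⟩ := my_bidualMap_surjective T hsurj b₂
    have hgoal : (arensExt (ContinuousLinearMap.mul ℂ B).flip).flip b₁ b₂ =
        arensExt (ContinuousLinearMap.mul ℂ B).flip b₂ b₁ := rfl
    rw [hgoal, ← hx, ← hy, ← key, ← keyf, h]
    rfl
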